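/- arXiv:0802.2800 — 3 statements merged into one kernel-verified Lean document; each statement's English description precedes it below -/
import Mathlib

section
/- Let Y and C be independent real random variables with C having continuous survival function Ḡ(t) = P(C > t), and let T = min(Y, C), δ = 1_{Y ≤ C}. If Ḡ(Y) > 0 almost surely, then E[δ·T/Ḡ(T)] = E[Y]. -/
open MeasureTheory ProbabilityTheory

/-- Unbiasedness of inverse-probability-of-censoring weighting:
if `Y ⟂ C`, `Ḡ(t) = P(C > t)` is continuous, `T = min(Y,C)`, `δ = 1_{Y ≤ C}`,
and `Ḡ(Y) > 0` a.s., then `E[δ T / Ḡ(T)] = E[Y]`. -/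
theorem stmt0 {Ω : Type*} [MeasureSpace Ω] [IsProbabilityMeasure (ℙ : Measure Ω)]
    (Y C : Ω → ℝ) (hY : Measurable Y) (hC : Measurable C)
    (hind : IndepFun Y C ℙ)
    (G : ℝ → ℝ) (hG : ∀ t, G t = (ℙ {ω | t < C ω}).toReal)
    (hGcont : Continuous G)
    (hpos : ∀ᵐ ω ∂ℙ, 0 < G (Y ω))
    (hYint : Integrable Y ℙ)
    (hint : Integrable (fun ω =>
      (if Y ω ≤ C ω then (1 : ℝ) else 0) * min (Y ω) (C ω) / G (min (Y ω) (C ω))) ℙ) :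
    ∫ ω, (if Y ω ≤ C ω then (1 : ℝ) else 0) * min (Y ω) (C ω) / G (min (Y ω) (C ω)) ∂ℙ
      = ∫ ω, Y ω ∂ℙ := by
  classical
  set μ := Measure.map Y ℙ with hμdef
  set ν := Measure.map C ℙ with hνdef
  have hνprob : IsProbabilityMeasure ν := Measure.isProbabilityMeasure_map hC.aemeasurable
  have hμprob : IsProbabilityMeasure μ := Measure.isProbabilityMeasure_map hY.aemeasurable
  have hGIoi : ∀ y, G y = (ν (Set.Ioi y)).toReal := by
    intro y
    rw [hG y, hνdef, Measure.map_apply hC measurableSet_Ioi]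
    rfl
  have hIci : ∀ y, (ν (Set.Ici y)).toReal = G y := by
    intro y
    have hle : (ν (Set.Ici y)).toReal ≤ G y := by
      have hev : ∀ᶠ t in nhdsWithin y (Set.Iio y), (ν (Set.Ici y)).toReal ≤ G t := by
        filter_upwards [self_mem_nhdsWithin] with t ht
        rw [hGIoi t]
        exact ENNReal.toReal_le_toReal (measure_ne_top _ _) (measure_ne_top _ _) |>.mpr
          (measure_mono fun c hc => Set.mem_Ioi.mpr (lt_of_lt_of_le ht hc))
      exact ge_of_tendsto ((hGcont.tendsto y).mono_left nhdsWithin_le_nhds) hev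
    have hge : G y ≤ (ν (Set.Ici y)).toReal := by
      rw [hGIoi y]
      exact ENNReal.toReal_le_toReal (measure_ne_top _ _) (measure_ne_top _ _) |>.mpr
        (measure_mono Set.Ioi_subset_Ici_self)
    linarith
  set F : ℝ × ℝ → ℝ := fun p => if p.1 ≤ p.2 then p.1 / G p.1 else 0 with hFdef
  have hFeq : ∀ ω, (if Y ω ≤ C ω then (1:ℝ) else 0) * min (Y ω) (C ω) / G (min (Y ω) (C ω))
      = F (Y ω, C ω) := by
    intro ω
    by_cases h : Y ω ≤ C ω
    · simp [hFdef, h, min_eq_left h]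
    · simp [hFdef, h]
  have hmap : Measure.map (fun ω => (Y ω, C ω)) ℙ = μ.prod ν :=
    (indepFun_iff_map_prod_eq_prod_map_map hY.aemeasurable hC.aemeasurable).mp hind
  have hFmeas : Measurable F :=
    Measurable.ite (measurableSet_le measurable_fst measurable_snd)
      (measurable_fst.div ((hGcont.measurable).comp measurable_fst)) measurable_const
  have hFint : Integrable F (μ.prod ν) := by
    rw [← hmap]
    rw [integrable_map_measure hFmeas.aestronglyMeasurable (hY.prodMk hC).aemeasurable]
    exact hint.congr (Filter.Eventually.of_forall fun ω => (hFeq ω))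
  calc ∫ ω, (if Y ω ≤ C ω then (1:ℝ) else 0) * min (Y ω) (C ω) / G (min (Y ω) (C ω)) ∂ℙ
      = ∫ ω, F (Y ω, C ω) ∂ℙ := by
        exact integral_congr_ae (Filter.Eventually.of_forall fun ω => hFeq ω)
    _ = ∫ p, F p ∂(μ.prod ν) := by
        rw [← hmap, integral_map (hY.prodMk hC).aemeasurable hFmeas.aestronglyMeasurable]
    _ = ∫ y, ∫ c, F (y, c) ∂ν ∂μ := integral_prod F hFint
    _ = ∫ y, y ∂μ := by
        have key : ∀ᵐ y ∂μ, (∫ c, F (y, c) ∂ν) = y := by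
          have hposμ : ∀ᵐ y ∂μ, 0 < G y := by
            rw [hμdef, ae_map_iff hY.aemeasurable (measurableSet_lt measurable_const hGcont.measurable)]
            exact hpos
          filter_upwards [hposμ] with y hy
          have : (fun c => F (y, c)) = Set.indicator (Set.Ici y) (fun _ => y / G y) := by
            funext c
            by_cases h : y ≤ c
            · simp [hFdef, h, Set.indicator_of_mem (Set.mem_Ici.mpr h)]
            · simp [hFdef, h, Set.indicator_of_notMem (fun hc => h (Set.mem_Ici.mp hc))]
          rw [this, integral_indicator_const _ measurableSet_Ici, measureReal_def, hIci y, smul_eq_mul]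
          field_simp
        exact integral_congr_ae key
    _ = ∫ ω, Y ω ∂ℙ := by
        exact integral_map hY.aemeasurable aestronglyMeasurable_id
end

section
/- Let Y and C be independent real random variables with C having continuous survival function Ḡ, let T = Y ∧ C, δ = 1_{Y ≤ C}, and let X be a random vector such that C is independent of (X, Y). If Ḡ(Y) > 0 almost surely, then the conditional expectation E[δ·T/Ḡ(T) | X] equals E[Y | X] almost surely. -/
open MeasureTheory ProbabilityTheory

/-- In the censored regression model, if `C` is independent of `(X, Y)`, the survival
function `Ḡ(t) = P(C > t)` is continuous and `Ḡ(Y) > 0` a.s., then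
`E[δ T / Ḡ(T) | X] = E[Y | X]` a.s., where `T = Y ∧ C` and `δ = 1_{Y ≤ C}`. -/
theorem stmt1 {Ω : Type*} [MeasureSpace Ω] [IsProbabilityMeasure (ℙ : Measure Ω)]
    {d : ℕ} (Y C : Ω → ℝ) (X : Ω → (Fin d → ℝ))
    (hY : Measurable Y) (hC : Measurable C) (hX : Measurable X)
    (hind : IndepFun (fun ω => (X ω, Y ω)) C ℙ)
    (G : ℝ → ℝ) (hG : ∀ t, G t = (ℙ {ω | t < C ω}).toReal)
    (hGcont : Continuous G)
    (hpos : ∀ᵐ ω ∂ℙ, 0 < G (Y ω))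
    (hYint : Integrable Y ℙ)
    (hint : Integrable (fun ω =>
      (if Y ω ≤ C ω then (1 : ℝ) else 0) * min (Y ω) (C ω) / G (min (Y ω) (C ω))) ℙ) :
    (ℙ : Measure Ω)[fun ω =>
        (if Y ω ≤ C ω then (1 : ℝ) else 0) * min (Y ω) (C ω) / G (min (Y ω) (C ω)) |
      MeasurableSpace.comap X inferInstance]
      =ᵐ[ℙ] (ℙ : Measure Ω)[Y | MeasurableSpace.comap X inferInstance] := by
  classical
  set Z : Ω → ℝ := fun ω =>
    (if Y ω ≤ C ω then (1 : ℝ) else 0) * min (Y ω) (C ω) / G (min (Y ω) (C ω)) with hZdef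
  -- pointwise simplification of Z
  have hZeq : ∀ ω, Z ω = if Y ω ≤ C ω then Y ω / G (Y ω) else 0 := by
    intro ω
    by_cases h : Y ω ≤ C ω
    · simp [hZdef, h, min_eq_left h]
    · simp [hZdef, h]
  -- survival function fact: P(y ≤ C) = G y
  have hsurv : ∀ y : ℝ, (ℙ {ω | y ≤ C ω}).toReal = G y := by
    intro y
    have hfin : ∀ s : Set Ω, ℙ s ≠ ⊤ := fun s => measure_ne_top _ _
    have h1 : G y ≤ (ℙ {ω | y ≤ C ω}).toReal := by
      rw [hG]
      refine ENNReal.toReal_mono (hfin _) (measure_mono ?_)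
      intro ω h
      exact le_of_lt (show y < C ω from h)
    have h2 : ∀ t < y, (ℙ {ω | y ≤ C ω}).toReal ≤ G t := by
      intro t ht
      rw [hG]
      refine ENNReal.toReal_mono (hfin _) (measure_mono ?_)
      intro ω h
      exact lt_of_lt_of_le ht (show y ≤ C ω from h)
    have htend : Filter.Tendsto (fun n : ℕ => G (y - 1 / (n + 1))) Filter.atTop (nhds (G y)) := by
      apply (hGcont.tendsto y).comp
      have h0 : Filter.Tendsto (fun n : ℕ => (1 : ℝ) / (n + 1)) Filter.atTop (nhds 0) :=
        tendsto_one_div_add_atTop_nhds_zero_nat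
      have := Filter.Tendsto.const_sub y h0
      simpa using this
    have h3 : (ℙ {ω | y ≤ C ω}).toReal ≤ G y := by
      refine ge_of_tendsto htend (Filter.Eventually.of_forall fun n => ?_)
      refine h2 _ ?_
      have : (0 : ℝ) < 1 / (n + 1) := by positivity
      linarith
    linarith
  -- measurability of comap
  have hm : MeasurableSpace.comap X inferInstance ≤ (inferInstance : MeasurableSpace Ω) :=
    hX.comap_le
  haveI : SigmaFinite ((ℙ : Measure Ω).trim hm) := by
    haveI : IsFiniteMeasure ((ℙ : Measure Ω).trim hm) := isFiniteMeasure_trim hm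
    infer_instance
  -- the pair map and product structure
  set W : Ω → (Fin d → ℝ) × ℝ := fun ω => (X ω, Y ω) with hWdef
  have hW : Measurable W := hX.prodMk hY
  have hmap : (ℙ : Measure Ω).map (fun ω => (W ω, C ω))
      = ((ℙ : Measure Ω).map W).prod ((ℙ : Measure Ω).map C) :=
    (indepFun_iff_map_prod_eq_prod_map_map hW.aemeasurable hC.aemeasurable).mp hind
  set μ := (ℙ : Measure Ω).map W with hμdef
  set ν := (ℙ : Measure Ω).map C with hνdef
  haveI : IsProbabilityMeasure μ := Measure.isProbabilityMeasure_map hW.aemeasurable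
  haveI : IsProbabilityMeasure ν := Measure.isProbabilityMeasure_map hC.aemeasurable
  -- ν of right rays
  have hν : ∀ y : ℝ, (ν {c | y ≤ c}).toReal = G y := by
    intro y
    have : ν {c | y ≤ c} = ℙ {ω | y ≤ C ω} := by
      rw [hνdef]
      exact Measure.map_apply hC measurableSet_Ici
    rw [this, hsurv]
  -- a.e. positivity pushed to μ
  have hposμ : ∀ᵐ p ∂μ, 0 < G p.2 := by
    rw [hμdef, ae_map_iff hW.aemeasurable]
    · exact hpos
    · exact measurableSet_lt measurable_const (hGcont.measurable.comp measurable_snd)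
  -- key set-integral identity
  have hkey : ∀ B : Set (Fin d → ℝ), MeasurableSet B →
      ∫ ω in X ⁻¹' B, Z ω ∂ℙ = ∫ ω in X ⁻¹' B, Y ω ∂ℙ := by
    intro B hB
    set F : ((Fin d → ℝ) × ℝ) × ℝ → ℝ := fun q =>
      (if q.1.1 ∈ B then (1 : ℝ) else 0) * (if q.1.2 ≤ q.2 then q.1.2 / G q.1.2 else 0)
      with hFdef
    have hFmeas : Measurable F := by
      apply Measurable.mul
      · exact Measurable.ite ((measurable_fst.comp measurable_fst) hB) measurable_const
          measurable_const
      · refine Measurable.ite ?_ ?_ measurable_const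
        · exact measurableSet_le (measurable_snd.comp measurable_fst) measurable_snd
        · exact (measurable_snd.comp measurable_fst).div
            (hGcont.measurable.comp (measurable_snd.comp measurable_fst))
    have hFcomp : ∀ ω, F (W ω, C ω) = (X ⁻¹' B).indicator Z ω := by
      intro ω
      by_cases hω : X ω ∈ B
      · rw [Set.indicator_of_mem (show ω ∈ X ⁻¹' B from hω), hZeq]
        simp [hFdef, hWdef, hω]
      · rw [Set.indicator_of_notMem (show ω ∉ X ⁻¹' B from hω)]
        simp [hFdef, hWdef, hω]
    -- integrability over the product
    have hZind : Integrable ((X ⁻¹' B).indicator Z) ℙ := hint.indicator (hX hB)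
    have hFint : Integrable F (μ.prod ν) := by
      rw [hμdef, hνdef, ← hmap]
      rw [integrable_map_measure hFmeas.aestronglyMeasurable (hW.prodMk hC).aemeasurable]
      exact hZind.congr (Filter.Eventually.of_forall fun ω => (hFcomp ω).symm)
    -- step 1: ∫_s Z = ∫ F d(μ.prod ν)
    have step1 : ∫ ω in X ⁻¹' B, Z ω ∂ℙ = ∫ q, F q ∂(μ.prod ν) := by
      rw [← integral_indicator (hX hB)]
      rw [hμdef, hνdef, ← hmap,
        integral_map (hW.prodMk hC).aemeasurable hFmeas.aestronglyMeasurable]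
      exact integral_congr_ae (Filter.Eventually.of_forall fun ω => (hFcomp ω).symm)
    -- step 2: Fubini and inner integral
    have step2 : ∫ q, F q ∂(μ.prod ν)
        = ∫ p, (if p.1 ∈ B then (1 : ℝ) else 0) * (p.2 / G p.2 * G p.2) ∂μ := by
      rw [integral_prod _ hFint]
      refine integral_congr_ae (Filter.Eventually.of_forall fun p => ?_)
      dsimp only
      have heq : (fun c => F (p, c)) = fun c =>
          (Set.Ici p.2).indicator
            (fun _ => (if p.1 ∈ B then (1 : ℝ) else 0) * (p.2 / G p.2)) c := by
        funext c
        by_cases h : p.2 ≤ c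
        · rw [Set.indicator_of_mem (show c ∈ Set.Ici p.2 from h)]
          simp [hFdef, h]
        · rw [Set.indicator_of_notMem (show c ∉ Set.Ici p.2 from h)]
          simp [hFdef, h]
      have hνIci : ν.real (Set.Ici p.2) = G p.2 := hν p.2
      rw [heq, integral_indicator measurableSet_Ici, setIntegral_const, smul_eq_mul, hνIci]
      ring
    -- step 3: use positivity to cancel
    have step3 : ∫ p, (if p.1 ∈ B then (1 : ℝ) else 0) * (p.2 / G p.2 * G p.2) ∂μ
        = ∫ p, (if p.1 ∈ B then (1 : ℝ) else 0) * p.2 ∂μ := by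
      refine integral_congr_ae ?_
      filter_upwards [hposμ] with p hp
      rw [div_mul_cancel₀ _ (ne_of_gt hp)]
    -- step 4: back to Ω
    have step4 : ∫ p, (if p.1 ∈ B then (1 : ℝ) else 0) * p.2 ∂μ
        = ∫ ω in X ⁻¹' B, Y ω ∂ℙ := by
      rw [hμdef, integral_map hW.aemeasurable]
      · rw [← integral_indicator (hX hB)]
        refine integral_congr_ae (Filter.Eventually.of_forall fun ω => ?_)
        by_cases hω : X ω ∈ B
        · rw [Set.indicator_of_mem (show ω ∈ X ⁻¹' B from hω)]
          simp [hWdef, hω]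
        · rw [Set.indicator_of_notMem (show ω ∉ X ⁻¹' B from hω)]
          simp [hWdef, hω]
      · apply Measurable.aestronglyMeasurable
        exact (Measurable.ite (measurable_fst hB) measurable_const measurable_const).mul
          measurable_snd
    rw [step1, step2, step3, step4]
  -- conclude by uniqueness of conditional expectation
  refine (ae_eq_condExp_of_forall_setIntegral_eq hm hint
    (fun s hs _ => integrable_condExp.integrableOn)
    (fun s hs _ => ?_) stronglyMeasurable_condExp.aestronglyMeasurable).symm
  obtain ⟨B, hB, rfl⟩ := hs
  rw [setIntegral_condExp hm hYint ⟨B, hB, rfl⟩]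
  exact (hkey B hB).symm
end

section
/- Let (Y_i) and (C_i) be two sequences of random variables that are α-mixing with coefficients α₁(n) and α₂(n) respectively, and assume the two sequences are independent of each other. Then the sequence T_i = Y_i ∧ C_i is α-mixing with coefficient α(n) ≤ 4 max(α₁(n), α₂(n)). -/
open MeasureTheory ProbabilityTheory Set

lemma discr15 {N : ℕ} (hN : 0 < N) {c : ℝ} (h0 : 0 ≤ c) (h1 : c ≤ 1) :
    (N:ℝ)⁻¹ * (∑ i ∈ Finset.range N, if ((i:ℝ)+1)/(N:ℝ) < c then (1:ℝ) else 0) ≤ c ∧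
    c - 2/(N:ℝ) ≤
      (N:ℝ)⁻¹ * (∑ i ∈ Finset.range N, if ((i:ℝ)+1)/(N:ℝ) < c then (1:ℝ) else 0) := by
  have hNr : (0:ℝ) < N := by exact_mod_cast hN
  set m : ℕ := ⌊(N:ℝ)*c⌋₊ with hm
  have hmle : (m:ℝ) ≤ (N:ℝ)*c := Nat.floor_le (by positivity)
  have hmgt : (N:ℝ)*c < (m:ℝ) + 1 := Nat.lt_floor_add_one _
  have hmN : m ≤ N := by
    have : (m:ℝ) ≤ (N:ℝ) := hmle.trans (by nlinarith)
    exact_mod_cast this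
  have hsum_le : (∑ i ∈ Finset.range N, if ((i:ℝ)+1)/(N:ℝ) < c then (1:ℝ) else 0) ≤ (m:ℝ) := by
    calc (∑ i ∈ Finset.range N, if ((i:ℝ)+1)/(N:ℝ) < c then (1:ℝ) else 0)
        ≤ ∑ i ∈ Finset.range N, (if i < m then (1:ℝ) else 0) := by
          apply Finset.sum_le_sum
          intro i _
          by_cases h : ((i:ℝ)+1)/(N:ℝ) < c
          · rw [if_pos h]
            have h2 : (i:ℝ)+1 < (N:ℝ)*c := by
              rw [div_lt_iff₀ hNr] at h; nlinarith
            have h3 : i+1 ≤ m := Nat.le_floor (by push_cast; linarith)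
            rw [if_pos (by omega)]
          · rw [if_neg h]; split_ifs <;> norm_num
      _ ≤ (m:ℝ) := by
          rw [Finset.sum_boole]
          have hsub : {x ∈ Finset.range N | x < m} ⊆ Finset.range m := by
            intro i hi
            simp only [Finset.mem_filter, Finset.mem_range] at hi ⊢
            exact hi.2
          have := Finset.card_le_card hsub
          rw [Finset.card_range] at this
          exact_mod_cast this
  have hsum_nonneg : (0:ℝ) ≤ ∑ i ∈ Finset.range N, if ((i:ℝ)+1)/(N:ℝ) < c then (1:ℝ) else 0 := by
    apply Finset.sum_nonneg; intro i _; split_ifs <;> norm_num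
  constructor
  · rw [inv_mul_le_iff₀ hNr]
    calc (∑ i ∈ Finset.range N, if ((i:ℝ)+1)/(N:ℝ) < c then (1:ℝ) else 0) ≤ (m:ℝ) := hsum_le
      _ ≤ (N:ℝ)*c := hmle
  · rcases Nat.eq_zero_or_pos m with h0m | hpos
    · have : (N:ℝ)*c < 1 := by rw [h0m] at hmgt; simpa using hmgt
      have hc2 : c < 1/(N:ℝ) := by rw [lt_div_iff₀ hNr]; nlinarith
      have hdiff : (2:ℝ)/N - 1/N = 1/N := by ring
      have h1N : (0:ℝ) < 1/N := by positivity
      have hle0 : c - 2/(N:ℝ) ≤ 0 := by linarith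
      calc c - 2/(N:ℝ) ≤ 0 := hle0
        _ ≤ _ := by positivity
    · have hsum_ge : ((m:ℝ) - 1) ≤
          ∑ i ∈ Finset.range N, if ((i:ℝ)+1)/(N:ℝ) < c then (1:ℝ) else 0 := by
        have hsub : Finset.range (m-1) ⊆ Finset.range N := Finset.range_subset_range.mpr (by omega)
        have h1' : ∀ i ∈ Finset.range (m-1), (if ((i:ℝ)+1)/(N:ℝ) < c then (1:ℝ) else 0) = 1 := by
          intro i hi
          rw [Finset.mem_range] at hi
          have hi1 : (i:ℝ) + 1 ≤ (m:ℝ) - 1 := by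
            have : i + 1 ≤ m - 1 := by omega
            have := (Nat.cast_le (α := ℝ)).mpr this
            push_cast [Nat.cast_sub hpos] at this ⊢
            linarith
          rw [if_pos]
          rw [div_lt_iff₀ hNr]
          nlinarith
        calc (m:ℝ) - 1 ≤ ((m-1:ℕ):ℝ) := by
              push_cast [Nat.cast_sub hpos]; linarith
          _ = ∑ i ∈ Finset.range (m-1), if ((i:ℝ)+1)/(N:ℝ) < c then (1:ℝ) else 0 := by
              rw [Finset.sum_congr rfl h1', Finset.sum_const, Finset.card_range]; simp
          _ ≤ _ := Finset.sum_le_sum_of_subset_of_nonneg hsub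
              (fun i _ _ => by split_ifs <;> norm_num)
      calc c - 2/(N:ℝ) ≤ (N:ℝ)⁻¹ * ((m:ℝ)-1) := by
            rw [inv_mul_eq_div, le_div_iff₀ hNr]
            have expand : (c - 2/(N:ℝ)) * N = c*N - 2 := by field_simp
            rw [expand]; nlinarith
        _ ≤ _ := mul_le_mul_of_nonneg_left hsum_ge (by positivity)

lemma bdd15 {X : Type*} [mX : MeasurableSpace X] {μ : Measure X} [IsFiniteMeasure μ]
    {f : X → ℝ} (hf : Measurable f) (h : ∀ x, |f x| ≤ 1) : Integrable f μ :=
  (integrable_const (1:ℝ)).mono' hf.aestronglyMeasurable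
    (ae_of_all _ fun x => by simpa [Real.norm_eq_abs] using h x)

lemma cov15 {X : Type*} (F₁ F₂ : MeasurableSpace X) [mX : MeasurableSpace X]
    (μ : Measure X) [IsProbabilityMeasure μ]
    (hF₁ : F₁ ≤ mX) (hF₂ : F₂ ≤ mX) (a : ℝ)
    (ha : ∀ S T : Set X, MeasurableSet[F₁] S → MeasurableSet[F₂] T →
      |(μ (S ∩ T)).toReal - (μ S).toReal * (μ T).toReal| ≤ a)
    (u v : X → ℝ) (hu : Measurable[F₁] u) (hv : Measurable[F₂] v)
    (hu0 : ∀ x, 0 ≤ u x) (hu1 : ∀ x, u x ≤ 1) (hv0 : ∀ x, 0 ≤ v x) (hv1 : ∀ x, v x ≤ 1) :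
    |(∫ x, u x * v x ∂μ) - (∫ x, u x ∂μ) * ∫ x, v x ∂μ| ≤ a := by
  have hum : Measurable u := hu.mono hF₁ le_rfl
  have hvm : Measurable v := hv.mono hF₂ le_rfl
  refine le_of_forall_pos_le_add fun ε hε => ?_
  obtain ⟨N, hNgt⟩ := exists_nat_gt (8/ε)
  have hNr : (0:ℝ) < N := lt_trans (by positivity) hNgt
  have hN : 0 < N := by exact_mod_cast hNr
  set Nr : ℝ := (N:ℝ) with hNrdef
  have h2Nr : (0:ℝ) < 2/Nr := div_pos two_pos hNr
  set U : ℕ → Set X := fun i => u ⁻¹' Set.Ioi (((i:ℝ)+1)/Nr) with hUdef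
  set V : ℕ → Set X := fun j => v ⁻¹' Set.Ioi (((j:ℝ)+1)/Nr) with hVdef
  have hUm : ∀ i, MeasurableSet[F₁] (U i) := fun i => hu measurableSet_Ioi
  have hVm : ∀ j, MeasurableSet[F₂] (V j) := fun j => hv measurableSet_Ioi
  set uN : X → ℝ := fun x => Nr⁻¹ * ∑ i ∈ Finset.range N, Set.indicator (U i) 1 x with huNdef
  set vN : X → ℝ := fun x => Nr⁻¹ * ∑ j ∈ Finset.range N, Set.indicator (V j) 1 x with hvNdef
  have huNx : ∀ x, uN x = Nr⁻¹ * ∑ i ∈ Finset.range N,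
      if ((i:ℝ)+1)/Nr < u x then (1:ℝ) else 0 := by
    intro x
    simp only [huNdef]
    congr 1
  have hvNx : ∀ x, vN x = Nr⁻¹ * ∑ j ∈ Finset.range N,
      if ((j:ℝ)+1)/Nr < v x then (1:ℝ) else 0 := by
    intro x
    simp only [hvNdef]
    congr 1
  have huNle : ∀ x, uN x ≤ u x := fun x => by
    rw [huNx]; exact (discr15 hN (hu0 x) (hu1 x)).1
  have huNge : ∀ x, u x - 2/Nr ≤ uN x := fun x => by
    rw [huNx]; exact (discr15 hN (hu0 x) (hu1 x)).2
  have hvNle : ∀ x, vN x ≤ v x := fun x => by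
    rw [hvNx]; exact (discr15 hN (hv0 x) (hv1 x)).1
  have hvNge : ∀ x, v x - 2/Nr ≤ vN x := fun x => by
    rw [hvNx]; exact (discr15 hN (hv0 x) (hv1 x)).2
  have huN0 : ∀ x, 0 ≤ uN x := by
    intro x; rw [huNx]
    apply mul_nonneg (by positivity)
    apply Finset.sum_nonneg; intro i _; split_ifs <;> norm_num
  have hvN0 : ∀ x, 0 ≤ vN x := by
    intro x; rw [hvNx]
    apply mul_nonneg (by positivity)
    apply Finset.sum_nonneg; intro j _; split_ifs <;> norm_num
  have hIndU : ∀ i, Integrable (Set.indicator (U i) (1 : X → ℝ)) μ :=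
    fun i => (integrable_const (1:ℝ)).indicator (hF₁ _ (hUm i))
  have hIndV : ∀ j, Integrable (Set.indicator (V j) (1 : X → ℝ)) μ :=
    fun j => (integrable_const (1:ℝ)).indicator (hF₂ _ (hVm j))
  -- integrals of uN, vN
  have hIuN : ∫ x, uN x ∂μ = Nr⁻¹ * ∑ i ∈ Finset.range N, (μ (U i)).toReal := by
    simp only [huNdef]
    rw [integral_const_mul, integral_finset_sum _ (fun i _ => hIndU i)]
    congr 1
    exact Finset.sum_congr rfl fun i _ => integral_indicator_one (hF₁ _ (hUm i))
  have hIvN : ∫ x, vN x ∂μ = Nr⁻¹ * ∑ j ∈ Finset.range N, (μ (V j)).toReal := by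
    simp only [hvNdef]
    rw [integral_const_mul, integral_finset_sum _ (fun j _ => hIndV j)]
    congr 1
    exact Finset.sum_congr rfl fun j _ => integral_indicator_one (hF₂ _ (hVm j))
  have hprod_pt : ∀ x, uN x * vN x = (Nr⁻¹*Nr⁻¹) *
      ∑ i ∈ Finset.range N, ∑ j ∈ Finset.range N, Set.indicator (U i ∩ V j) 1 x := by
    intro x
    have : uN x * vN x = (Nr⁻¹*Nr⁻¹) * ((∑ i ∈ Finset.range N, Set.indicator (U i) 1 x) *
        (∑ j ∈ Finset.range N, Set.indicator (V j) 1 x)) := by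
      simp only [huNdef, hvNdef]; ring
    rw [this, Finset.sum_mul_sum]
    congr 1
    refine Finset.sum_congr rfl fun i _ => Finset.sum_congr rfl fun j _ => ?_
    rw [Set.inter_indicator_one]; rfl
  have hIndUV : ∀ i j, Integrable (Set.indicator (U i ∩ V j) (1 : X → ℝ)) μ :=
    fun i j => (integrable_const (1:ℝ)).indicator ((hF₁ _ (hUm i)).inter (hF₂ _ (hVm j)))
  have hIuNvN : ∫ x, uN x * vN x ∂μ = (Nr⁻¹*Nr⁻¹) *
      ∑ i ∈ Finset.range N, ∑ j ∈ Finset.range N, (μ (U i ∩ V j)).toReal := by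
    simp only [hprod_pt]
    rw [integral_const_mul]
    rw [integral_finset_sum _ (fun i _ => integrable_finset_sum _ (fun j _ => hIndUV i j))]
    congr 1
    refine Finset.sum_congr rfl fun i _ => ?_
    rw [integral_finset_sum _ (fun j _ => hIndUV i j)]
    exact Finset.sum_congr rfl fun j _ =>
      integral_indicator_one ((hF₁ _ (hUm i)).inter (hF₂ _ (hVm j)))
  -- covariance of discretized functions
  have hCovN : |(∫ x, uN x * vN x ∂μ) - (∫ x, uN x ∂μ) * ∫ x, vN x ∂μ| ≤ a := by
    rw [hIuNvN, hIuN, hIvN]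
    have : (Nr⁻¹ * ∑ i ∈ Finset.range N, (μ (U i)).toReal) *
        (Nr⁻¹ * ∑ j ∈ Finset.range N, (μ (V j)).toReal) = (Nr⁻¹*Nr⁻¹) *
        ∑ i ∈ Finset.range N, ∑ j ∈ Finset.range N, (μ (U i)).toReal * (μ (V j)).toReal := by
      have h' : (Nr⁻¹ * ∑ i ∈ Finset.range N, (μ (U i)).toReal) *
          (Nr⁻¹ * ∑ j ∈ Finset.range N, (μ (V j)).toReal) = (Nr⁻¹*Nr⁻¹) *
          ((∑ i ∈ Finset.range N, (μ (U i)).toReal) *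
            ∑ j ∈ Finset.range N, (μ (V j)).toReal) := by ring
      rw [h', Finset.sum_mul_sum]
    rw [this, ← mul_sub, ← Finset.sum_sub_distrib]
    simp_rw [← Finset.sum_sub_distrib]
    rw [abs_mul]
    have habs : |Nr⁻¹*Nr⁻¹| = Nr⁻¹*Nr⁻¹ := abs_of_nonneg (by positivity)
    rw [habs]
    have hbound : |∑ i ∈ Finset.range N, ∑ j ∈ Finset.range N,
        ((μ (U i ∩ V j)).toReal - (μ (U i)).toReal * (μ (V j)).toReal)| ≤ Nr * (Nr * a) := by
      calc |∑ i ∈ Finset.range N, ∑ j ∈ Finset.range N,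
          ((μ (U i ∩ V j)).toReal - (μ (U i)).toReal * (μ (V j)).toReal)|
          ≤ ∑ i ∈ Finset.range N, |∑ j ∈ Finset.range N,
            ((μ (U i ∩ V j)).toReal - (μ (U i)).toReal * (μ (V j)).toReal)| :=
            Finset.abs_sum_le_sum_abs _ _
        _ ≤ ∑ i ∈ Finset.range N, (Nr * a) := by
            apply Finset.sum_le_sum
            intro i _
            calc |∑ j ∈ Finset.range N,
                ((μ (U i ∩ V j)).toReal - (μ (U i)).toReal * (μ (V j)).toReal)|
                ≤ ∑ j ∈ Finset.range N,
                  |(μ (U i ∩ V j)).toReal - (μ (U i)).toReal * (μ (V j)).toReal| :=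
                  Finset.abs_sum_le_sum_abs _ _
              _ ≤ ∑ _j ∈ Finset.range N, a :=
                  Finset.sum_le_sum fun j _ => ha _ _ (hUm i) (hVm j)
              _ = Nr * a := by rw [Finset.sum_const, Finset.card_range, nsmul_eq_mul, hNrdef]
        _ = Nr * (Nr * a) := by rw [Finset.sum_const, Finset.card_range, nsmul_eq_mul, hNrdef]
    calc (Nr⁻¹*Nr⁻¹) * |∑ i ∈ Finset.range N, ∑ j ∈ Finset.range N,
        ((μ (U i ∩ V j)).toReal - (μ (U i)).toReal * (μ (V j)).toReal)|
        ≤ (Nr⁻¹*Nr⁻¹) * (Nr * (Nr * a)) :=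
          mul_le_mul_of_nonneg_left hbound (by positivity)
      _ = a := by
          have hNr0 : Nr ≠ 0 := ne_of_gt hNr
          field_simp
  -- integrability
  have huNm : Measurable uN := by
    apply Measurable.const_mul
    exact Finset.measurable_sum _ fun i _ => (measurable_const.indicator (hF₁ _ (hUm i)))
  have hvNm : Measurable vN := by
    apply Measurable.const_mul
    exact Finset.measurable_sum _ fun j _ => (measurable_const.indicator (hF₂ _ (hVm j)))
  have habs1 : ∀ x, |u x| ≤ 1 := fun x => abs_le.mpr ⟨by linarith [hu0 x], hu1 x⟩
  have habs2 : ∀ x, |v x| ≤ 1 := fun x => abs_le.mpr ⟨by linarith [hv0 x], hv1 x⟩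
  have habs3 : ∀ x, |uN x| ≤ 1 := fun x => abs_le.mpr
    ⟨by linarith [huN0 x], (huNle x).trans (hu1 x)⟩
  have habs4 : ∀ x, |vN x| ≤ 1 := fun x => abs_le.mpr
    ⟨by linarith [hvN0 x], (hvNle x).trans (hv1 x)⟩
  have hIu : Integrable u μ := bdd15 hum habs1
  have hIv : Integrable v μ := bdd15 hvm habs2
  have hIuN' : Integrable uN μ := bdd15 huNm habs3
  have hIvN' : Integrable vN μ := bdd15 hvNm habs4
  have hIuv : Integrable (fun x => u x * v x) μ := bdd15 (hum.mul hvm)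
    (fun x => by rw [abs_mul]; exact mul_le_one₀ (habs1 x) (abs_nonneg _) (habs2 x))
  have hIuvN : Integrable (fun x => uN x * vN x) μ := bdd15 (huNm.mul hvNm)
    (fun x => by rw [abs_mul]; exact mul_le_one₀ (habs3 x) (abs_nonneg _) (habs4 x))
  -- comparison of integrals
  have hcmp1 : |(∫ x, u x * v x ∂μ) - ∫ x, uN x * vN x ∂μ| ≤ 4/Nr := by
    rw [← integral_sub hIuv hIuvN]
    have := norm_integral_le_of_norm_le_const (μ := μ)
      (f := fun x => u x * v x - uN x * vN x) (C := 4/Nr) ?_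
    · simpa [measure_univ, Real.norm_eq_abs] using this
    · refine ae_of_all _ fun x => ?_
      show ‖u x * v x - uN x * vN x‖ ≤ 4/Nr
      rw [Real.norm_eq_abs]
      have e1 : u x * v x - uN x * vN x = (u x - uN x) * v x + uN x * (v x - vN x) := by ring
      rw [e1]
      have b1 : |(u x - uN x) * v x| ≤ 2/Nr := by
        rw [abs_mul]
        have : |u x - uN x| ≤ 2/Nr := abs_le.mpr ⟨by linarith [huNle x, h2Nr], by linarith [huNge x]⟩
        calc |u x - uN x| * |v x| ≤ (2/Nr) * 1 :=
            mul_le_mul this (habs2 x) (abs_nonneg _) (by positivity)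
          _ = 2/Nr := mul_one _
      have b2 : |uN x * (v x - vN x)| ≤ 2/Nr := by
        rw [abs_mul]
        have : |v x - vN x| ≤ 2/Nr := abs_le.mpr ⟨by linarith [hvNle x, h2Nr], by linarith [hvNge x]⟩
        calc |uN x| * |v x - vN x| ≤ 1 * (2/Nr) :=
            mul_le_mul (habs3 x) this (abs_nonneg _) (by norm_num)
          _ = 2/Nr := one_mul _
      calc |(u x - uN x) * v x + uN x * (v x - vN x)|
          ≤ |(u x - uN x) * v x| + |uN x * (v x - vN x)| := abs_add_le _ _
        _ ≤ 2/Nr + 2/Nr := add_le_add b1 b2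
        _ = 4/Nr := by ring
  have hIbd : ∀ (f : X → ℝ), Integrable f μ → (∀ x, |f x| ≤ 1) → |∫ x, f x ∂μ| ≤ 1 := by
    intro f hf hb
    have := norm_integral_le_of_norm_le_const (μ := μ) (f := f) (C := 1)
      (ae_of_all _ fun x => by show ‖f x‖ ≤ 1; rw [Real.norm_eq_abs]; exact hb x)
    simpa [measure_univ, Real.norm_eq_abs] using this
  have hdiffu : |(∫ x, u x ∂μ) - ∫ x, uN x ∂μ| ≤ 2/Nr := by
    rw [← integral_sub hIu hIuN']
    have := norm_integral_le_of_norm_le_const (μ := μ) (f := fun x => u x - uN x) (C := 2/Nr)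
      (ae_of_all _ fun x => by
        show ‖u x - uN x‖ ≤ 2/Nr
        rw [Real.norm_eq_abs]
        exact abs_le.mpr ⟨by linarith [huNle x, h2Nr], by linarith [huNge x]⟩)
    simpa [measure_univ, Real.norm_eq_abs] using this
  have hdiffv : |(∫ x, v x ∂μ) - ∫ x, vN x ∂μ| ≤ 2/Nr := by
    rw [← integral_sub hIv hIvN']
    have := norm_integral_le_of_norm_le_const (μ := μ) (f := fun x => v x - vN x) (C := 2/Nr)
      (ae_of_all _ fun x => by
        show ‖v x - vN x‖ ≤ 2/Nr
        rw [Real.norm_eq_abs]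
        exact abs_le.mpr ⟨by linarith [hvNle x, h2Nr], by linarith [hvNge x]⟩)
    simpa [measure_univ, Real.norm_eq_abs] using this
  have hcmp2 : |(∫ x, u x ∂μ) * (∫ x, v x ∂μ) - (∫ x, uN x ∂μ) * ∫ x, vN x ∂μ| ≤ 4/Nr := by
    have e1 : (∫ x, u x ∂μ) * (∫ x, v x ∂μ) - (∫ x, uN x ∂μ) * ∫ x, vN x ∂μ
        = ((∫ x, u x ∂μ) - ∫ x, uN x ∂μ) * (∫ x, v x ∂μ)
          + (∫ x, uN x ∂μ) * ((∫ x, v x ∂μ) - ∫ x, vN x ∂μ) := by ring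
    rw [e1]
    calc |((∫ x, u x ∂μ) - ∫ x, uN x ∂μ) * (∫ x, v x ∂μ)
          + (∫ x, uN x ∂μ) * ((∫ x, v x ∂μ) - ∫ x, vN x ∂μ)|
        ≤ |((∫ x, u x ∂μ) - ∫ x, uN x ∂μ) * (∫ x, v x ∂μ)|
          + |(∫ x, uN x ∂μ) * ((∫ x, v x ∂μ) - ∫ x, vN x ∂μ)| := abs_add_le _ _
      _ ≤ (2/Nr) * 1 + 1 * (2/Nr) := by
          rw [abs_mul, abs_mul]
          exact add_le_add
            (mul_le_mul hdiffu (hIbd v hIv habs2) (abs_nonneg _) (by positivity))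
            (mul_le_mul (hIbd uN hIuN' habs3) hdiffv (abs_nonneg _) (by norm_num))
      _ = 4/Nr := by ring
  -- assemble
  have h8 : 8/Nr < ε := by
    rw [div_lt_iff₀ hNr]
    rw [div_lt_iff₀ hε] at hNgt
    nlinarith
  calc |(∫ x, u x * v x ∂μ) - (∫ x, u x ∂μ) * ∫ x, v x ∂μ|
      ≤ |(∫ x, u x * v x ∂μ) - ∫ x, uN x * vN x ∂μ|
        + |(∫ x, uN x * vN x ∂μ) - (∫ x, uN x ∂μ) * ∫ x, vN x ∂μ|
        + |(∫ x, uN x ∂μ) * (∫ x, vN x ∂μ) - (∫ x, u x ∂μ) * ∫ x, v x ∂μ| := by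
          have := abs_add_le ((∫ x, u x * v x ∂μ) - ∫ x, uN x * vN x ∂μ)
            (((∫ x, uN x * vN x ∂μ) - (∫ x, uN x ∂μ) * ∫ x, vN x ∂μ)
              + ((∫ x, uN x ∂μ) * (∫ x, vN x ∂μ) - (∫ x, u x ∂μ) * ∫ x, v x ∂μ))
          have h2 := abs_add_le ((∫ x, uN x * vN x ∂μ) - (∫ x, uN x ∂μ) * ∫ x, vN x ∂μ)
            ((∫ x, uN x ∂μ) * (∫ x, vN x ∂μ) - (∫ x, u x ∂μ) * ∫ x, v x ∂μ)
          have e : (∫ x, u x * v x ∂μ) - (∫ x, u x ∂μ) * ∫ x, v x ∂μ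
              = ((∫ x, u x * v x ∂μ) - ∫ x, uN x * vN x ∂μ)
              + (((∫ x, uN x * vN x ∂μ) - (∫ x, uN x ∂μ) * ∫ x, vN x ∂μ)
              + ((∫ x, uN x ∂μ) * (∫ x, vN x ∂μ) - (∫ x, u x ∂μ) * ∫ x, v x ∂μ)) := by ring
          rw [e]
          linarith
    _ ≤ 4/Nr + a + 4/Nr := by
        have h3 : |(∫ x, uN x ∂μ) * (∫ x, vN x ∂μ) - (∫ x, u x ∂μ) * ∫ x, v x ∂μ| ≤ 4/Nr := by
          rw [abs_sub_comm]; exact hcmp2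
        exact add_le_add (add_le_add hcmp1 hCovN) h3
    _ ≤ a + ε := by
        have h48 : (4:ℝ)/Nr + 4/Nr = 8/Nr := by ring
        linarith

lemma core15 {Xt Zt : Type*} (F₁ F₂ : MeasurableSpace Xt) (G₁ G₂ : MeasurableSpace Zt)
    [mX : MeasurableSpace Xt] [mZ : MeasurableSpace Zt]
    (μ : Measure Xt) (ν : Measure Zt) [IsProbabilityMeasure μ] [IsProbabilityMeasure ν]
    (hF₁ : F₁ ≤ mX) (hF₂ : F₂ ≤ mX) (hG₁ : G₁ ≤ mZ) (hG₂ : G₂ ≤ mZ)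
    (a b : ℝ)
    (ha : ∀ S T : Set Xt, MeasurableSet[F₁] S → MeasurableSet[F₂] T →
      |(μ (S ∩ T)).toReal - (μ S).toReal * (μ T).toReal| ≤ a)
    (hb : ∀ S T : Set Zt, MeasurableSet[G₁] S → MeasurableSet[G₂] T →
      |(ν (S ∩ T)).toReal - (ν S).toReal * (ν T).toReal| ≤ b)
    (A B : Set (Xt × Zt))
    (hA : MeasurableSet[F₁.comap Prod.fst ⊔ G₁.comap Prod.snd] A)
    (hB : MeasurableSet[F₂.comap Prod.fst ⊔ G₂.comap Prod.snd] B) :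
    |((μ.prod ν) (A ∩ B)).toReal - ((μ.prod ν) A).toReal * ((μ.prod ν) B).toReal| ≤ a + b := by
  -- full measurability
  have hProdA : MeasurableSet[(F₁.comap Prod.fst ⊔ G₁.comap Prod.snd)] A := hA
  have hAm : MeasurableSet A :=
    (sup_le_sup (MeasurableSpace.comap_mono hF₁) (MeasurableSpace.comap_mono hG₁)) A hA
  have hBm : MeasurableSet B :=
    (sup_le_sup (MeasurableSpace.comap_mono hF₂) (MeasurableSpace.comap_mono hG₂)) B hB
  have hABm : MeasurableSet (A ∩ B) := hAm.inter hBm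
  have hsectA : ∀ x, MeasurableSet[G₁] (Prod.mk x ⁻¹' A) :=
    fun x => (@measurable_prodMk_left Xt Zt F₁ G₁ x) hA
  have hsectB : ∀ x, MeasurableSet[G₂] (Prod.mk x ⁻¹' B) :=
    fun x => (@measurable_prodMk_left Xt Zt F₂ G₂ x) hB
  haveI hP1 : IsProbabilityMeasure (ν.trim hG₁) :=
    ⟨by rw [trim_measurableSet_eq hG₁ MeasurableSet.univ]; exact measure_univ⟩
  haveI hP2 : IsProbabilityMeasure (ν.trim hG₂) :=
    ⟨by rw [trim_measurableSet_eq hG₂ MeasurableSet.univ]; exact measure_univ⟩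
  have hmA : Measurable[F₁] (fun x => ν (Prod.mk x ⁻¹' A)) := by
    have h := @measurable_measure_prodMk_left Xt Zt F₁ G₁ (ν.trim hG₁) inferInstance A hA
    have he : (fun x => ν.trim hG₁ (Prod.mk x ⁻¹' A)) = fun x => ν (Prod.mk x ⁻¹' A) :=
      funext fun x => trim_measurableSet_eq hG₁ (hsectA x)
    rwa [he] at h
  have hmB : Measurable[F₂] (fun x => ν (Prod.mk x ⁻¹' B)) := by
    have h := @measurable_measure_prodMk_left Xt Zt F₂ G₂ (ν.trim hG₂) inferInstance B hB
    have he : (fun x => ν.trim hG₂ (Prod.mk x ⁻¹' B)) = fun x => ν (Prod.mk x ⁻¹' B) :=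
      funext fun x => trim_measurableSet_eq hG₂ (hsectB x)
    rwa [he] at h
  have hmAB : Measurable (fun x => ν (Prod.mk x ⁻¹' (A ∩ B))) :=
    measurable_measure_prodMk_left hABm
  have keyA : ((μ.prod ν) A).toReal = ∫ x, (ν (Prod.mk x ⁻¹' A)).toReal ∂μ := by
    rw [Measure.prod_apply hAm]
    exact (integral_toReal ((hmA.mono hF₁ le_rfl).aemeasurable)
      (ae_of_all _ fun x => measure_lt_top _ _)).symm
  have keyB : ((μ.prod ν) B).toReal = ∫ x, (ν (Prod.mk x ⁻¹' B)).toReal ∂μ := by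
    rw [Measure.prod_apply hBm]
    exact (integral_toReal ((hmB.mono hF₂ le_rfl).aemeasurable)
      (ae_of_all _ fun x => measure_lt_top _ _)).symm
  have keyAB : ((μ.prod ν) (A ∩ B)).toReal = ∫ x, (ν (Prod.mk x ⁻¹' (A ∩ B))).toReal ∂μ := by
    rw [Measure.prod_apply hABm]
    exact (integral_toReal (hmAB.aemeasurable)
      (ae_of_all _ fun x => measure_lt_top _ _)).symm
  have hle1 : ∀ (W : Set (Xt × Zt)) (x : Xt), (ν (Prod.mk x ⁻¹' W)).toReal ≤ 1 := by
    intro W x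
    have h1 : ν (Prod.mk x ⁻¹' W) ≤ 1 := prob_le_one
    calc (ν (Prod.mk x ⁻¹' W)).toReal ≤ (1 : ENNReal).toReal :=
        ENNReal.toReal_mono ENNReal.one_ne_top h1
      _ = 1 := by simp
  have hIAB : Integrable (fun x => (ν (Prod.mk x ⁻¹' (A ∩ B))).toReal) μ :=
    bdd15 hmAB.ennreal_toReal (fun x => by
      rw [abs_of_nonneg ENNReal.toReal_nonneg]; exact hle1 _ x)
  have hIABprod : Integrable
      (fun x => (ν (Prod.mk x ⁻¹' A)).toReal * (ν (Prod.mk x ⁻¹' B)).toReal) μ :=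
    bdd15 (((hmA.mono hF₁ le_rfl).ennreal_toReal).mul ((hmB.mono hF₂ le_rfl).ennreal_toReal))
      (fun x => by
        rw [abs_mul, abs_of_nonneg ENNReal.toReal_nonneg, abs_of_nonneg ENNReal.toReal_nonneg]
        exact mul_le_one₀ (hle1 A x) ENNReal.toReal_nonneg (hle1 B x))
  have hsplit : ((μ.prod ν) (A ∩ B)).toReal - ((μ.prod ν) A).toReal * ((μ.prod ν) B).toReal
      = (∫ x, ((ν (Prod.mk x ⁻¹' (A ∩ B))).toReal
          - (ν (Prod.mk x ⁻¹' A)).toReal * (ν (Prod.mk x ⁻¹' B)).toReal) ∂μ)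
        + ((∫ x, (ν (Prod.mk x ⁻¹' A)).toReal * (ν (Prod.mk x ⁻¹' B)).toReal ∂μ)
          - (∫ x, (ν (Prod.mk x ⁻¹' A)).toReal ∂μ) * ∫ x, (ν (Prod.mk x ⁻¹' B)).toReal ∂μ) := by
    rw [keyAB, keyA, keyB, integral_sub hIAB hIABprod]
    ring
  have hterm1 : |∫ x, ((ν (Prod.mk x ⁻¹' (A ∩ B))).toReal
      - (ν (Prod.mk x ⁻¹' A)).toReal * (ν (Prod.mk x ⁻¹' B)).toReal) ∂μ| ≤ b := by
    have := norm_integral_le_of_norm_le_const (μ := μ) (C := b)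
      (f := fun x => (ν (Prod.mk x ⁻¹' (A ∩ B))).toReal
        - (ν (Prod.mk x ⁻¹' A)).toReal * (ν (Prod.mk x ⁻¹' B)).toReal)
      (ae_of_all _ fun x => by
        show ‖(ν (Prod.mk x ⁻¹' (A ∩ B))).toReal
          - (ν (Prod.mk x ⁻¹' A)).toReal * (ν (Prod.mk x ⁻¹' B)).toReal‖ ≤ b
        rw [Real.norm_eq_abs, Set.preimage_inter]
        exact hb _ _ (hsectA x) (hsectB x))
    simpa [measure_univ] using this
  have hterm2 : |(∫ x, (ν (Prod.mk x ⁻¹' A)).toReal * (ν (Prod.mk x ⁻¹' B)).toReal ∂μ)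
      - (∫ x, (ν (Prod.mk x ⁻¹' A)).toReal ∂μ) * ∫ x, (ν (Prod.mk x ⁻¹' B)).toReal ∂μ| ≤ a :=
    cov15 F₁ F₂ μ hF₁ hF₂ a ha _ _ hmA.ennreal_toReal hmB.ennreal_toReal
      (fun x => ENNReal.toReal_nonneg) (fun x => hle1 A x)
      (fun x => ENNReal.toReal_nonneg) (fun x => hle1 B x)
  rw [hsplit]
  calc |_ + _| ≤ _ + _ := abs_add_le _ _
    _ ≤ b + a := add_le_add hterm1 hterm2
    _ = a + b := add_comm _ _

def sigF15 (s : Set ℕ) : MeasurableSpace (ℕ → ℝ) :=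
  ⨆ i ∈ s, MeasurableSpace.comap (fun f : ℕ → ℝ => f i) inferInstance

lemma sigF15_le (s : Set ℕ) : sigF15 s ≤ (inferInstance : MeasurableSpace (ℕ → ℝ)) :=
  iSup₂_le fun i _ => (measurable_pi_apply i).comap_le

lemma sigcomap15 {Ω : Type*} (Z : ℕ → Ω → ℝ) (s : Set ℕ) :
    (sigF15 s).comap (fun ω j => Z j ω)
      = ⨆ i ∈ s, MeasurableSpace.comap (Z i) inferInstance := by
  rw [sigF15, MeasurableSpace.comap_iSup]
  refine iSup_congr fun i => ?_
  rw [MeasurableSpace.comap_iSup]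
  refine iSup_congr fun _ => ?_
  rw [MeasurableSpace.comap_comp]
  rfl

lemma sigcomap15' {Ω : Type*} (Z : ℕ → Ω → ℝ) :
    MeasurableSpace.comap (fun ω j => Z j ω) (inferInstance : MeasurableSpace (ℕ → ℝ))
      = ⨆ i, MeasurableSpace.comap (Z i) inferInstance := by
  have hpi : (inferInstance : MeasurableSpace (ℕ → ℝ))
      = ⨆ i : ℕ, MeasurableSpace.comap (fun f : ℕ → ℝ => f i) inferInstance := rfl
  rw [hpi, MeasurableSpace.comap_iSup]
  refine iSup_congr fun i => ?_
  rw [MeasurableSpace.comap_comp]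
  rfl

lemma mincomap15 {Ω : Type*} (f g : Ω → ℝ) :
    MeasurableSpace.comap (fun ω => min (f ω) (g ω)) inferInstance ≤
      MeasurableSpace.comap f inferInstance ⊔ MeasurableSpace.comap g inferInstance :=
  Measurable.comap_le (Measurable.min
    (Measurable.of_comap_le le_sup_left) (Measurable.of_comap_le le_sup_right))


/-- The σ-algebra generated by `Z_a, …, Z_b`. -/
def sigmaIcc15 {Ω : Type*} (Z : ℕ → Ω → ℝ) (a b : ℕ) : MeasurableSpace Ω :=
  ⨆ i ∈ Icc a b, MeasurableSpace.comap (Z i) inferInstance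

/-- The σ-algebra generated by `Z_a, Z_{a+1}, …`. -/
def sigmaIci15 {Ω : Type*} (Z : ℕ → Ω → ℝ) (a : ℕ) : MeasurableSpace Ω :=
  ⨆ i ∈ Ici a, MeasurableSpace.comap (Z i) inferInstance

/-- Cai (2001), Lemma 2: if `(Y_i)` and `(C_i)` are α-mixing with coefficients `α₁, α₂`
and the two sequences are mutually independent, then `T_i = Y_i ∧ C_i` is α-mixing with
coefficient at most `4 max(α₁(n), α₂(n))`. -/
theorem stmt15 {Ω : Type*} [MeasureSpace Ω] [IsProbabilityMeasure (ℙ : Measure Ω)]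
    (Y C : ℕ → Ω → ℝ) (hY : ∀ i, Measurable (Y i)) (hC : ∀ i, Measurable (C i))
    (hindep : Indep (⨆ i, MeasurableSpace.comap (Y i) inferInstance)
      (⨆ i, MeasurableSpace.comap (C i) inferInstance) (ℙ : Measure Ω))
    (α₁ α₂ : ℕ → ℝ)
    (hα₁ : ∀ k n : ℕ, ∀ A B : Set Ω,
      MeasurableSet[sigmaIcc15 Y 1 k] A → MeasurableSet[sigmaIci15 Y (k + n)] B →
        |((ℙ : Measure Ω) (A ∩ B)).toReal
          - ((ℙ : Measure Ω) A).toReal * ((ℙ : Measure Ω) B).toReal| ≤ α₁ n)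
    (hα₂ : ∀ k n : ℕ, ∀ A B : Set Ω,
      MeasurableSet[sigmaIcc15 C 1 k] A → MeasurableSet[sigmaIci15 C (k + n)] B →
        |((ℙ : Measure Ω) (A ∩ B)).toReal
          - ((ℙ : Measure Ω) A).toReal * ((ℙ : Measure Ω) B).toReal| ≤ α₂ n) :
    ∀ k n : ℕ, ∀ A B : Set Ω,
      MeasurableSet[sigmaIcc15 (fun i ω => min (Y i ω) (C i ω)) 1 k] A →
      MeasurableSet[sigmaIci15 (fun i ω => min (Y i ω) (C i ω)) (k + n)] B →
        |((ℙ : Measure Ω) (A ∩ B)).toReal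
          - ((ℙ : Measure Ω) A).toReal * ((ℙ : Measure Ω) B).toReal|
          ≤ 4 * max (α₁ n) (α₂ n) := by
  intro k n A B hA hB
  have hα₁0 : 0 ≤ α₁ n := by
    have := hα₁ k n ∅ ∅ (@MeasurableSet.empty _ (sigmaIcc15 Y 1 k))
      (@MeasurableSet.empty _ (sigmaIci15 Y (k + n)))
    simpa using this
  have hYV : Measurable (fun ω j => Y j ω : Ω → ℕ → ℝ) := measurable_pi_lambda _ hY
  have hCV : Measurable (fun ω j => C j ω : Ω → ℕ → ℝ) := measurable_pi_lambda _ hC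
  have hΦ : Measurable (fun ω => ((fun j => Y j ω), (fun j => C j ω)) : Ω → (ℕ → ℝ) × (ℕ → ℝ)) :=
    hYV.prodMk hCV
  haveI hPY : IsProbabilityMeasure ((ℙ : Measure Ω).map (fun ω j => Y j ω)) :=
    Measure.isProbabilityMeasure_map hYV.aemeasurable
  haveI hPC : IsProbabilityMeasure ((ℙ : Measure Ω).map (fun ω j => C j ω)) :=
    Measure.isProbabilityMeasure_map hCV.aemeasurable
  -- the joint law is the product of the marginals
  have hprod : ((ℙ : Measure Ω).map (fun ω j => Y j ω)).prod
      ((ℙ : Measure Ω).map (fun ω j => C j ω))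
      = (ℙ : Measure Ω).map (fun ω => ((fun j => Y j ω), (fun j => C j ω))) := by
    refine Measure.prod_eq fun s t hs ht => ?_
    rw [Measure.map_apply hΦ (hs.prod ht), Measure.map_apply hYV hs, Measure.map_apply hCV ht]
    have hpre : (fun ω => ((fun j => Y j ω), (fun j => C j ω)) : Ω → (ℕ → ℝ) × (ℕ → ℝ)) ⁻¹'
        (s ×ˢ t) = ((fun ω j => Y j ω : Ω → ℕ → ℝ) ⁻¹' s) ∩ ((fun ω j => C j ω : Ω → ℕ → ℝ) ⁻¹' t)
      := rfl
    rw [hpre]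
    refine (hindep.indepSet_of_measurableSet ?_ ?_).measure_inter_eq_mul
    · rw [← sigcomap15' Y]
      exact MeasurableSpace.measurableSet_comap.mpr ⟨s, hs, rfl⟩
    · rw [← sigcomap15' C]
      exact MeasurableSpace.measurableSet_comap.mpr ⟨t, ht, rfl⟩
  -- identify the sub-σ-algebras as comaps of the joint map
  have hiden : ∀ s : Set ℕ,
      MeasurableSpace.comap (fun ω => ((fun j => Y j ω), (fun j => C j ω)))
        ((sigF15 s).comap Prod.fst ⊔ (sigF15 s).comap Prod.snd)
      = (⨆ i ∈ s, MeasurableSpace.comap (Y i) inferInstance)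
        ⊔ ⨆ i ∈ s, MeasurableSpace.comap (C i) inferInstance := by
    intro s
    rw [MeasurableSpace.comap_sup, MeasurableSpace.comap_comp, MeasurableSpace.comap_comp]
    rw [show (Prod.fst ∘ fun ω => ((fun j => Y j ω), (fun j => C j ω)) : Ω → ℕ → ℝ)
        = fun ω j => Y j ω from rfl,
      show (Prod.snd ∘ fun ω => ((fun j => Y j ω), (fun j => C j ω)) : Ω → ℕ → ℝ)
        = fun ω j => C j ω from rfl, sigcomap15, sigcomap15]
  -- land A and B in the comap σ-algebras
  have hsubA : sigmaIcc15 (fun i ω => min (Y i ω) (C i ω)) 1 k ≤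
      MeasurableSpace.comap (fun ω => ((fun j => Y j ω), (fun j => C j ω)))
        ((sigF15 (Icc 1 k)).comap Prod.fst ⊔ (sigF15 (Icc 1 k)).comap Prod.snd) := by
    rw [hiden]
    refine iSup₂_le fun i hi => (mincomap15 (Y i) (C i)).trans (sup_le_sup ?_ ?_)
    · exact le_biSup (fun i => MeasurableSpace.comap (Y i) inferInstance) hi
    · exact le_biSup (fun i => MeasurableSpace.comap (C i) inferInstance) hi
  have hsubB : sigmaIci15 (fun i ω => min (Y i ω) (C i ω)) (k + n) ≤
      MeasurableSpace.comap (fun ω => ((fun j => Y j ω), (fun j => C j ω)))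
        ((sigF15 (Ici (k + n))).comap Prod.fst ⊔ (sigF15 (Ici (k + n))).comap Prod.snd) := by
    rw [hiden]
    refine iSup₂_le fun i hi => (mincomap15 (Y i) (C i)).trans (sup_le_sup ?_ ?_)
    · exact le_biSup (fun i => MeasurableSpace.comap (Y i) inferInstance) hi
    · exact le_biSup (fun i => MeasurableSpace.comap (C i) inferInstance) hi
  obtain ⟨A₂, hA₂, hAeq⟩ := MeasurableSpace.measurableSet_comap.mp (hsubA A hA)
  obtain ⟨B₂, hB₂, hBeq⟩ := MeasurableSpace.measurableSet_comap.mp (hsubB B hB)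
  have hA₂m : MeasurableSet A₂ :=
    (sup_le_sup (MeasurableSpace.comap_mono (sigF15_le _))
      (MeasurableSpace.comap_mono (sigF15_le _))) A₂ hA₂
  have hB₂m : MeasurableSet B₂ :=
    (sup_le_sup (MeasurableSpace.comap_mono (sigF15_le _))
      (MeasurableSpace.comap_mono (sigF15_le _))) B₂ hB₂
  -- mixing hypotheses transferred to the canonical space
  have hmix₁ : ∀ S T : Set (ℕ → ℝ), MeasurableSet[sigF15 (Icc 1 k)] S →
      MeasurableSet[sigF15 (Ici (k + n))] T →
      |(((ℙ : Measure Ω).map (fun ω j => Y j ω)) (S ∩ T)).toReal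
        - (((ℙ : Measure Ω).map (fun ω j => Y j ω)) S).toReal
          * (((ℙ : Measure Ω).map (fun ω j => Y j ω)) T).toReal| ≤ α₁ n := by
    intro S T hS hT
    rw [Measure.map_apply hYV ((sigF15_le _ _ hS).inter (sigF15_le _ _ hT)),
      Measure.map_apply hYV (sigF15_le _ _ hS), Measure.map_apply hYV (sigF15_le _ _ hT),
      Set.preimage_inter]
    refine hα₁ k n _ _ ?_ ?_
    · rw [show sigmaIcc15 Y 1 k
        = (sigF15 (Icc 1 k)).comap (fun ω j => Y j ω) from (sigcomap15 Y _).symm]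
      exact MeasurableSpace.measurableSet_comap.mpr ⟨S, hS, rfl⟩
    · rw [show sigmaIci15 Y (k + n)
        = (sigF15 (Ici (k + n))).comap (fun ω j => Y j ω) from (sigcomap15 Y _).symm]
      exact MeasurableSpace.measurableSet_comap.mpr ⟨T, hT, rfl⟩
  have hmix₂ : ∀ S T : Set (ℕ → ℝ), MeasurableSet[sigF15 (Icc 1 k)] S →
      MeasurableSet[sigF15 (Ici (k + n))] T →
      |(((ℙ : Measure Ω).map (fun ω j => C j ω)) (S ∩ T)).toReal
        - (((ℙ : Measure Ω).map (fun ω j => C j ω)) S).toReal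
          * (((ℙ : Measure Ω).map (fun ω j => C j ω)) T).toReal| ≤ α₂ n := by
    intro S T hS hT
    rw [Measure.map_apply hCV ((sigF15_le _ _ hS).inter (sigF15_le _ _ hT)),
      Measure.map_apply hCV (sigF15_le _ _ hS), Measure.map_apply hCV (sigF15_le _ _ hT),
      Set.preimage_inter]
    refine hα₂ k n _ _ ?_ ?_
    · rw [show sigmaIcc15 C 1 k
        = (sigF15 (Icc 1 k)).comap (fun ω j => C j ω) from (sigcomap15 C _).symm]
      exact MeasurableSpace.measurableSet_comap.mpr ⟨S, hS, rfl⟩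
    · rw [show sigmaIci15 C (k + n)
        = (sigF15 (Ici (k + n))).comap (fun ω j => C j ω) from (sigcomap15 C _).symm]
      exact MeasurableSpace.measurableSet_comap.mpr ⟨T, hT, rfl⟩
  have hcore := core15 (sigF15 (Icc 1 k)) (sigF15 (Ici (k + n)))
    (sigF15 (Icc 1 k)) (sigF15 (Ici (k + n)))
    ((ℙ : Measure Ω).map (fun ω j => Y j ω)) ((ℙ : Measure Ω).map (fun ω j => C j ω))
    (sigF15_le _) (sigF15_le _) (sigF15_le _) (sigF15_le _)
    (α₁ n) (α₂ n) hmix₁ hmix₂ A₂ B₂ hA₂ hB₂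
  -- rewrite the goal in terms of the canonical space
  have hPA : (ℙ : Measure Ω) A
      = (((ℙ : Measure Ω).map (fun ω j => Y j ω)).prod
          ((ℙ : Measure Ω).map (fun ω j => C j ω))) A₂ := by
    rw [hprod, Measure.map_apply hΦ hA₂m, hAeq]
  have hPB : (ℙ : Measure Ω) B
      = (((ℙ : Measure Ω).map (fun ω j => Y j ω)).prod
          ((ℙ : Measure Ω).map (fun ω j => C j ω))) B₂ := by
    rw [hprod, Measure.map_apply hΦ hB₂m, hBeq]
  have hPAB : (ℙ : Measure Ω) (A ∩ B)
      = (((ℙ : Measure Ω).map (fun ω j => Y j ω)).prod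
          ((ℙ : Measure Ω).map (fun ω j => C j ω))) (A₂ ∩ B₂) := by
    rw [hprod, Measure.map_apply hΦ (hA₂m.inter hB₂m), Set.preimage_inter, hAeq, hBeq]
  rw [hPA, hPB, hPAB]
  have h1 := le_max_left (α₁ n) (α₂ n)
  have h2 := le_max_right (α₁ n) (α₂ n)
  have hmax0 : 0 ≤ max (α₁ n) (α₂ n) := le_trans hα₁0 h1
  calc _ ≤ α₁ n + α₂ n := hcore
    _ ≤ 4 * max (α₁ n) (α₂ n) := by linarith
end
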